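/- Define f : [0,∞) → ℝ by f(t) = log t for t ≥ 1 and f(t) = t − 1 for t < 1. Then for any densities p, q on a set X with sup_x p(x)/q(x) ≤ V, it holds that E_{x∼p}[f(p(x)/q(x))] ≤ (4 + log V) · H²(p, q). -/

import Mathlib

/-- `f(t) = log t` for `t ≥ 1` and `f(t) = t − 1` for `t < 1`. -/
noncomputable def truncLog (t : ℝ) : ℝ := if 1 ≤ t then Real.log t else t - 1

lemma key_ineq (V r : ℝ) (hr : 0 ≤ r) (hrV : r ≤ V) (hV1 : 1 ≤ V) :
    r * truncLog r - r + 1 ≤ (4 + Real.log V) * (Real.sqrt r - 1) ^ 2 := by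
  have hM0 : 0 ≤ Real.log V := Real.log_nonneg hV1
  set s := Real.sqrt r with hs
  have hs0 : 0 ≤ s := Real.sqrt_nonneg r
  have hsr : s ^ 2 = r := Real.sq_sqrt hr
  unfold truncLog
  split_ifs with h
  · -- r ≥ 1
    have hs1 : 1 ≤ s := by nlinarith
    have hlogr : Real.log r ≤ 2 * (s - 1) := by
      have heq : Real.log s = Real.log r / 2 := Real.log_sqrt hr
      have := Real.log_le_sub_one_of_pos (show (0:ℝ) < s by linarith)
      linarith
    have hLM : Real.log r ≤ Real.log V := Real.log_le_log (by linarith) hrV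
    nlinarith [sq_nonneg (s - 1),
      mul_nonneg (sub_nonneg.2 hLM) (sq_nonneg (s - 1)),
      mul_nonneg (sub_nonneg.2 hlogr) (by linarith : (0:ℝ) ≤ 2 * s - 1)]
  · -- r < 1
    have hs1 : s ≤ 1 := by nlinarith
    nlinarith [sq_nonneg (s - 1), mul_nonneg hM0 (sq_nonneg (s - 1)),
      mul_nonneg (mul_nonneg (sub_nonneg.2 hs1) (by linarith : (0:ℝ) ≤ 3 + s))
        (sq_nonneg (s - 1))]

/-- For densities `p, q` on `X` with `p(x)/q(x) ≤ V` for all `x`, the `f`-divergence-type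
quantity `E_{x∼p}[f(p(x)/q(x))]` is at most `(4 + log V)` times the squared Hellinger
distance between `p` and `q`. -/
theorem truncLog_div_le_hellinger {X : Type} [Fintype X] (p q : X → ℝ) (V : ℝ)
    (hp0 : ∀ x, 0 ≤ p x) (hq0 : ∀ x, 0 < q x)
    (hp1 : (∑ x, p x) = 1) (hq1 : (∑ x, q x) = 1)
    (hV : ∀ x, p x / q x ≤ V) :
    (∑ x, p x * truncLog (p x / q x)) ≤
      (4 + Real.log V) * ∑ x, (Real.sqrt (p x) - Real.sqrt (q x)) ^ 2 := by
  have hV1 : (1:ℝ) ≤ V := by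
    have h : ∀ x, p x ≤ V * q x := fun x => (div_le_iff₀ (hq0 x)).1 (hV x)
    calc (1:ℝ) = ∑ x, p x := hp1.symm
      _ ≤ ∑ x, V * q x := Finset.sum_le_sum (fun x _ => h x)
      _ = V := by rw [← Finset.mul_sum, hq1, mul_one]
  have pt : ∀ x, p x * truncLog (p x / q x) ≤
      (4 + Real.log V) * (Real.sqrt (p x) - Real.sqrt (q x)) ^ 2 + (p x - q x) := by
    intro x
    have hq := hq0 x
    set r := p x / q x with hr
    have hr0 : 0 ≤ r := div_nonneg (hp0 x) hq.le
    have hkey := key_ineq V r hr0 (hV x) hV1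
    have hp : p x = q x * r := by
      rw [hr, mul_div_assoc']; exact (eq_div_iff hq.ne').2 (mul_comm _ _)
    have hsq : Real.sqrt (q x) * (Real.sqrt r - 1) =
        Real.sqrt (p x) - Real.sqrt (q x) := by
      rw [mul_sub, mul_one, ← Real.sqrt_mul hq.le, ← hp]
    have h2 : q x * (Real.sqrt r - 1) ^ 2 =
        (Real.sqrt (p x) - Real.sqrt (q x)) ^ 2 := by
      rw [← hsq, mul_pow, Real.sq_sqrt hq.le]
    have hmul := mul_le_mul_of_nonneg_left hkey hq.le
    calc p x * truncLog r = q x * (r * truncLog r - r + 1) + (p x - q x) := by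
          rw [hp]; ring
      _ ≤ q x * ((4 + Real.log V) * (Real.sqrt r - 1) ^ 2) + (p x - q x) := by
          linarith
      _ = (4 + Real.log V) * (Real.sqrt (p x) - Real.sqrt (q x)) ^ 2 + (p x - q x) := by
          rw [← h2]; ring
  calc (∑ x, p x * truncLog (p x / q x))
      ≤ ∑ x, ((4 + Real.log V) * (Real.sqrt (p x) - Real.sqrt (q x)) ^ 2
          + (p x - q x)) := Finset.sum_le_sum (fun x _ => pt x)
    _ = (4 + Real.log V) * ∑ x, (Real.sqrt (p x) - Real.sqrt (q x)) ^ 2 := by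
        rw [Finset.sum_add_distrib, Finset.sum_sub_distrib, hp1, hq1, ← Finset.mul_sum]
        ring
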